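/- For optimal non-singular coding (N ≥ 2, l_min = 1), the length of the code assigned to rank i equals ⌈log_N((1 − 1/N)·i + 1)⌉, which is also equal to ⌈log_N((N−1)·i + N)⌉ − 1. -/
import Mathlib

lemma geomZ (N l : ℕ) : ((N:ℤ)-1) * (∑ k ∈ Finset.Icc 1 l, (N:ℤ) ^ k) = (N:ℤ)^(l+1) - N := by
  induction l with
  | zero => simp
  | succ l ih =>
    rw [Finset.sum_Icc_succ_top (by omega), mul_add, ih]
    ring

lemma ceil_logb (N : ℕ) (hN : 2 ≤ N) (x : ℝ) (c : ℤ)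
    (h1 : (N:ℝ)^(c-1) < x) (h2 : x ≤ (N:ℝ)^c) : ⌈Real.logb N x⌉ = c := by
  have hb : (1:ℝ) < N := by exact_mod_cast by omega
  have hb0 : (0:ℝ) < N := by linarith
  have hx : 0 < x := lt_trans (zpow_pos hb0 _) h1
  rw [Int.ceil_eq_iff]
  constructor
  · have h' : (N:ℝ) ^ (((c-1:ℤ)):ℝ) < x := by
      rw [Real.rpow_intCast]; exact h1
    have := (Real.lt_logb_iff_rpow_lt hb hx).mpr h'
    push_cast at this
    linarith
  · have h' : x ≤ (N:ℝ) ^ ((c:ℤ):ℝ) := by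
      rw [Real.rpow_intCast]; exact h2
    exact (Real.logb_le_iff_le_rpow hb hx).mpr h'

theorem stmt7 (N i : ℕ) (hN : 2 ≤ N) (hi : 1 ≤ i) :
    ((sInf {l : ℕ | 1 ≤ l ∧ i ≤ ∑ k ∈ Finset.Icc 1 l, N ^ k} : ℕ) : ℤ) =
      ⌈Real.logb N ((1 - 1 / (N : ℝ)) * i + 1)⌉ ∧
    ⌈Real.logb N ((1 - 1 / (N : ℝ)) * i + 1)⌉ =
      ⌈Real.logb N (((N : ℝ) - 1) * i + N)⌉ - 1 := by
  set S : Set ℕ := {l : ℕ | 1 ≤ l ∧ i ≤ ∑ k ∈ Finset.Icc 1 l, N ^ k} with hS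
  set M : ℤ := ((N:ℤ)-1) * i + N with hM
  have hN1 : (1:ℤ) ≤ (N:ℤ) - 1 := by
    have : (2:ℤ) ≤ N := by exact_mod_cast hN
    omega
  have hiff : ∀ l : ℕ, (i ≤ ∑ k ∈ Finset.Icc 1 l, N ^ k) ↔ M ≤ (N:ℤ)^(l+1) := by
    intro l
    have hg := geomZ N l
    have hcast : ((∑ k ∈ Finset.Icc 1 l, N ^ k : ℕ) : ℤ) = ∑ k ∈ Finset.Icc 1 l, (N:ℤ) ^ k := by
      push_cast; ring
    constructor
    · intro h
      have h' : (i:ℤ) ≤ ∑ k ∈ Finset.Icc 1 l, (N:ℤ) ^ k := by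
        rw [← hcast]; exact_mod_cast h
      have := mul_le_mul_of_nonneg_left h' (by linarith : (0:ℤ) ≤ (N:ℤ)-1)
      rw [hg] at this
      simp only [hM]; linarith
    · intro h
      have h2 : ((N:ℤ)-1) * i ≤ ((N:ℤ)-1) * (∑ k ∈ Finset.Icc 1 l, (N:ℤ) ^ k) := by
        rw [hg]; simp only [hM] at h; linarith
      have h3 : (i:ℤ) ≤ ∑ k ∈ Finset.Icc 1 l, (N:ℤ) ^ k :=
        le_of_mul_le_mul_left h2 (by linarith)
      rw [← hcast] at h3
      exact_mod_cast h3
  have hne : S.Nonempty := by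
    refine ⟨i, hi, ?_⟩
    calc i = ∑ _k ∈ Finset.Icc 1 i, 1 := by simp
    _ ≤ ∑ k ∈ Finset.Icc 1 i, N ^ k :=
        Finset.sum_le_sum (fun k _ => Nat.one_le_pow _ _ (by omega))
  set L := sInf S with hL
  have hmem : L ∈ S := Nat.sInf_mem hne
  obtain ⟨hL1, hLsum⟩ := hmem
  have hup : M ≤ (N:ℤ)^(L+1) := (hiff L).mp hLsum
  have hlo : (N:ℤ)^L < M := by
    rcases Nat.lt_or_ge L 2 with h2 | h2
    · have : L = 1 := by omega
      rw [this]
      simp only [hM, pow_one]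
      nlinarith [show (1:ℤ) ≤ (i:ℤ) by exact_mod_cast hi]
    · have hnot : L - 1 ∉ S := Nat.notMem_of_lt_sInf (by omega)
      have : ¬ (i ≤ ∑ k ∈ Finset.Icc 1 (L-1), N ^ k) := by
        intro h; exact hnot ⟨by omega, h⟩
      have := fun h => this ((hiff (L-1)).mpr h)
      have hLe : L - 1 + 1 = L := by omega
      rw [hLe] at this
      exact lt_of_not_ge this
  -- real versions
  have hb0 : (0:ℝ) < N := by positivity
  have hbne : (N:ℝ) ≠ 0 := ne_of_gt hb0
  have hupR : (M:ℝ) ≤ (N:ℝ)^(L+1) := by exact_mod_cast hup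
  have hloR : (N:ℝ)^L < (M:ℝ) := by exact_mod_cast hlo
  have hMR : (M:ℝ) = ((N:ℝ)-1) * i + N := by rw [hM]; push_cast; ring
  have hx1 : (1 - 1 / (N : ℝ)) * i + 1 = (M:ℝ) / N := by
    rw [hMR]; field_simp; try ring
  have hc1 : ⌈Real.logb N ((1 - 1 / (N : ℝ)) * i + 1)⌉ = (L:ℤ) := by
    rw [hx1]
    apply ceil_logb N hN _ _ ?_ ?_
    · have heq : (N:ℝ) ^ ((L:ℤ) - 1) = (N:ℝ)^L / N := by
        rw [zpow_sub₀ hbne, zpow_natCast, zpow_one]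
      rw [heq]
      exact div_lt_div_of_pos_right hloR hb0
    · rw [zpow_natCast, div_le_iff₀ hb0, ← pow_succ]
      exact hupR
  have hc2 : ⌈Real.logb N (((N : ℝ) - 1) * i + N)⌉ = (L:ℤ) + 1 := by
    rw [← hMR]
    apply ceil_logb N hN _ _ ?_ ?_
    · have heq : (N:ℝ) ^ ((L:ℤ) + 1 - 1) = (N:ℝ)^L := by
        rw [add_sub_cancel_right, zpow_natCast]
      rw [heq]; exact hloR
    · have heq : (N:ℝ) ^ ((L:ℤ) + 1) = (N:ℝ)^(L+1) := by
        push_cast [← zpow_natCast]; ring_nf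
      rw [heq]; exact hupR
  refine ⟨by rw [hc1], by rw [hc1, hc2]; ring⟩
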